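/- Discrete fractional integral of a power: let 0<α<1 and β>−1. There exists a constant C>0, depending only on α and β, such that for every τ>0 and every integer n≥1, τ^α Σ_{j=1}^n a_{n−j}^{(−α)} (jτ)^β ≤ C (nτ)^{α+β}. -/

import Mathlib

open Finset Real

/-- The convolution quadrature weight `a_j^{(β)} = (-1)^j (β choose j)`, where
`(β choose j) = β(β-1)⋯(β-j+1)/j!` is the generalized binomial coefficient. -/
noncomputable def cqWeight (β : ℝ) (j : ℕ) : ℝ :=
  (-1) ^ j * ((∏ i ∈ Finset.range j, (β - i)) / (j.factorial : ℝ))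

/-- `a_j^{(-α)}` written without signs. -/
noncomputable def wfun (α : ℝ) (j : ℕ) : ℝ :=
  (∏ i ∈ Finset.range j, (α + i)) / (j.factorial : ℝ)

lemma cq_eq (α : ℝ) (j : ℕ) : cqWeight (-α) j = wfun α j := by
  unfold cqWeight wfun
  have h1 : (∏ i ∈ Finset.range j, (-α - (i:ℝ))) = (-1)^j * ∏ i ∈ Finset.range j, (α + i) := by
    rw [show ((-1:ℝ)^j) = ∏ _i ∈ Finset.range j, (-1:ℝ) by
      rw [Finset.prod_const, Finset.card_range], ← Finset.prod_mul_distrib]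
    exact Finset.prod_congr rfl fun i _ => by ring
  rw [h1, mul_div_assoc, ← mul_assoc, ← pow_add, ← two_mul, pow_mul]
  norm_num

lemma wfun_succ (α : ℝ) (j : ℕ) :
    wfun α (j+1) = wfun α j * ((α + j) / (j+1)) := by
  unfold wfun
  rw [Finset.prod_range_succ, Nat.factorial_succ, div_mul_div_comm]
  push_cast
  rw [mul_comm ((j:ℝ)+1) _]

lemma wfun_nonneg {α : ℝ} (hα : 0 < α) (j : ℕ) : 0 ≤ wfun α j := by
  unfold wfun
  apply div_nonneg _ (by positivity)
  exact Finset.prod_nonneg fun i _ => by positivity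

-- per-factor inequality: (α + j)/(j+1) ≤ ((j+2)/(j+1))^(α-1)
lemma factor_le {α : ℝ} (hα0 : 0 < α) (hα1 : α < 1) (j : ℕ) :
    (α + j) / ((j:ℝ)+1) ≤ (((j:ℝ)+2)/((j:ℝ)+1)) ^ (α-1) := by
  set x : ℝ := (j:ℝ) + 1 with hx
  have hx1 : 1 ≤ x := by simp [hx]
  have hx0 : 0 < x := lt_of_lt_of_le one_pos hx1
  have hA : 0 < (α + j) / x := by positivity
  have hB : 0 < ((x+1)/x) ^ (α-1) := by positivity
  have hxx : ((j:ℝ)+2)/((j:ℝ)+1) = (x+1)/x := by rw [hx]; ring_nf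
  rw [hxx]
  rw [← Real.exp_log hA, ← Real.exp_log hB]
  apply Real.exp_le_exp.mpr
  rw [Real.log_rpow (by positivity)]
  have h1 : Real.log ((α + j)/x) ≤ (α - 1)/x := by
    have := Real.log_le_sub_one_of_pos hA
    have e : (α + j)/x - 1 = (α-1)/x := by field_simp; ring
    linarith [e ▸ this]
  have h2 : Real.log ((x+1)/x) ≤ 1/x := by
    have hp : 0 < (x+1)/x := by positivity
    have := Real.log_le_sub_one_of_pos hp
    have e : (x+1)/x - 1 = 1/x := by field_simp; ring
    linarith [e ▸ this]
  have h3 : (α - 1) * Real.log ((x+1)/x) ≥ (α-1) * (1/x) := by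
    apply mul_le_mul_of_nonpos_left h2 (by linarith)
  calc Real.log ((α + j)/x) ≤ (α-1)/x := h1
    _ = (α-1) * (1/x) := by ring
    _ ≤ (α-1) * Real.log ((x+1)/x) := h3

lemma wfun_le {α : ℝ} (hα0 : 0 < α) (hα1 : α < 1) (j : ℕ) :
    wfun α j ≤ ((j:ℝ)+1) ^ (α-1) := by
  induction j with
  | zero => simp [wfun, Real.one_rpow]
  | succ j ih =>
    rw [wfun_succ]
    have hj1 : (0:ℝ) < (j:ℝ)+1 := by positivity
    have hfac : 0 ≤ (α + j) / ((j:ℝ)+1) := by positivity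
    calc wfun α j * ((α + j) / ((j:ℝ)+1))
        ≤ ((j:ℝ)+1)^(α-1) * ((((j:ℝ)+2)/((j:ℝ)+1)) ^ (α-1)) := by
          apply mul_le_mul ih (factor_le hα0 hα1 j) hfac (by positivity)
      _ = ((j:ℝ)+2)^(α-1) := by
          rw [← Real.mul_rpow (by positivity) (by positivity)]
          congr 1
          field_simp
      _ = ((j:ℝ)+1+1)^(α-1) := by ring_nf
      _ = (((j+1:ℕ):ℝ)+1)^(α-1) := by push_cast; ring_nf

-- telescoping ingredient
lemma step_ineq {p : ℝ} (hp0 : 0 < p) (hp1 : p ≤ 1) {k : ℕ} (hk : 1 ≤ k) :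
    p * (k:ℝ) ^ (p-1) ≤ (k:ℝ)^p - ((k:ℝ)-1)^p := by
  have hk0 : (0:ℝ) < k := by exact_mod_cast hk
  have hs : -1 ≤ -(1/(k:ℝ)) := by
    rw [neg_le_neg_iff]
    rw [div_le_one hk0]
    exact_mod_cast hk
  have hbern : (1 + -(1/(k:ℝ)))^p ≤ 1 + p * (-(1/(k:ℝ))) :=
    rpow_one_add_le_one_add_mul_self hs hp0.le hp1
  have he : (k:ℝ) - 1 = (k:ℝ) * (1 + -(1/(k:ℝ))) := by field_simp; ring
  have h1 : ((k:ℝ)-1)^p = (k:ℝ)^p * (1 + -(1/(k:ℝ)))^p := by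
    rw [he, Real.mul_rpow hk0.le (by linarith [hs])]
  have h2 : (k:ℝ)^p * (1 + -(1/(k:ℝ)))^p ≤ (k:ℝ)^p * (1 + p * (-(1/(k:ℝ)))) :=
    mul_le_mul_of_nonneg_left hbern (by positivity)
  have h3 : (k:ℝ)^p * (1 + p * (-(1/(k:ℝ)))) = (k:ℝ)^p - p * (k:ℝ)^(p-1) := by
    have : (k:ℝ)^(p-1) = (k:ℝ)^p / k := by
      rw [Real.rpow_sub hk0, Real.rpow_one]
    rw [this]; field_simp; ring
  nlinarith [h1, h2, h3]

lemma sum_rpow_le {p : ℝ} (hp0 : 0 < p) (hp1 : p ≤ 1) (m : ℕ) :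
    ∑ k ∈ Finset.Icc 1 m, (k:ℝ)^(p-1) ≤ (m:ℝ)^p / p := by
  induction m with
  | zero =>
    simp [Real.zero_rpow hp0.ne']
  | succ m ih =>
    rw [Finset.sum_Icc_succ_top (by omega)]
    have hstep := step_ineq hp0 hp1 (k := m+1) (by omega)
    have hc : ((m+1:ℕ):ℝ) = (m:ℝ)+1 := by push_cast; ring
    rw [hc] at hstep ⊢
    have : ((m:ℝ)+1)^(p-1) ≤ (((m:ℝ)+1)^p - (m:ℝ)^p)/p := by
      rw [le_div_iff₀ hp0]
      have e : ((m:ℝ)+1) - 1 = (m:ℝ) := by ring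
      rw [e] at hstep
      linarith
    calc (∑ k ∈ Finset.Icc 1 m, (k:ℝ)^(p-1)) + ((m:ℝ)+1)^(p-1)
        ≤ (m:ℝ)^p/p + (((m:ℝ)+1)^p - (m:ℝ)^p)/p := by
          exact add_le_add ih this
      _ = ((m:ℝ)+1)^p/p := by ring

lemma sum_reflect (f : ℕ → ℝ) (n : ℕ) :
    ∑ j ∈ Finset.Icc 1 n, f (n - j) = ∑ k ∈ Finset.range n, f k := by
  rw [show Finset.Icc 1 n = Finset.Ico 1 (n+1) by rw [Finset.Ico_add_one_right_eq_Icc],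
    Finset.sum_Ico_eq_sum_range]
  simp only [Nat.add_sub_cancel]
  rw [← Finset.sum_range_reflect (fun k => f k) n]
  exact Finset.sum_congr rfl fun i _ => by congr 1; omega

lemma range_to_Icc (g : ℕ → ℝ) (n : ℕ) :
    ∑ k ∈ Finset.range n, g (k+1) = ∑ k ∈ Finset.Icc 1 n, g k := by
  rw [show Finset.Icc 1 n = Finset.Ico 1 (n+1) by rw [Finset.Ico_add_one_right_eq_Icc],
    Finset.sum_Ico_eq_sum_range]
  simp only [Nat.add_sub_cancel]
  exact Finset.sum_congr rfl fun i _ => by congr 1; omega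

lemma weight_sum_le {α : ℝ} (hα0 : 0 < α) (hα1 : α < 1) (n : ℕ) :
    ∑ j ∈ Finset.Icc 1 n, wfun α (n - j) ≤ (n:ℝ)^α / α := by
  calc ∑ j ∈ Finset.Icc 1 n, wfun α (n - j)
      = ∑ k ∈ Finset.range n, wfun α k := sum_reflect _ n
    _ ≤ ∑ k ∈ Finset.range n, ((k:ℝ)+1)^(α-1) :=
        Finset.sum_le_sum fun k _ => wfun_le hα0 hα1 k
    _ = ∑ k ∈ Finset.Icc 1 n, (k:ℝ)^(α-1) := by
        rw [← range_to_Icc (fun k => (k:ℝ)^(α-1)) n]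
        exact Finset.sum_congr rfl fun i _ => by push_cast; ring_nf
    _ ≤ (n:ℝ)^α / α := sum_rpow_le hα0 hα1.le n

lemma key (α β : ℝ) (hα0 : 0 < α) (hα1 : α < 1) (hβ : -1 < β) :
    ∃ C > 0, ∀ n : ℕ, 1 ≤ n →
      ∑ j ∈ Finset.Icc 1 n, wfun α (n - j) * (j:ℝ)^β ≤ C * (n:ℝ)^(α+β) := by
  rcases le_or_gt 0 β with hb | hb
  · -- β ≥ 0 : C = 1/α
    refine ⟨1/α, by positivity, fun n hn => ?_⟩
    have hn0 : (0:ℝ) < n := by exact_mod_cast hn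
    calc ∑ j ∈ Finset.Icc 1 n, wfun α (n - j) * (j:ℝ)^β
        ≤ ∑ j ∈ Finset.Icc 1 n, wfun α (n - j) * (n:ℝ)^β := by
          apply Finset.sum_le_sum
          intro j hj
          have hjn : (j:ℝ) ≤ n := by
            exact_mod_cast (Finset.mem_Icc.mp hj).2
          exact mul_le_mul_of_nonneg_left
            (Real.rpow_le_rpow (by positivity) hjn hb) (wfun_nonneg hα0 _)
      _ = (∑ j ∈ Finset.Icc 1 n, wfun α (n - j)) * (n:ℝ)^β := by
          rw [Finset.sum_mul]
      _ ≤ ((n:ℝ)^α / α) * (n:ℝ)^β := by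
          apply mul_le_mul_of_nonneg_right (weight_sum_le hα0 hα1 n) (by positivity)
      _ = (1/α) * (n:ℝ)^(α+β) := by
          rw [Real.rpow_add hn0]; ring
  · -- β < 0 : C = 2^(1-α)/(β+1) + 2^(-β)/α
    have hb1 : 0 < β + 1 := by linarith
    refine ⟨(2:ℝ)^(1-α)/(β+1) + (2:ℝ)^(-β)/α, by positivity, fun n hn => ?_⟩
    have hn0 : (0:ℝ) < n := by exact_mod_cast hn
    set m := n / 2 with hm
    have hmn : m ≤ n := Nat.div_le_self n 2
    have hmc : (m:ℝ) ≤ (n:ℝ)/2 := Nat.cast_div_le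
    have hmc2 : (n:ℝ)/2 ≤ (m:ℝ) + 1 := by
      have : n ≤ 2*m + 1 := by omega
      have : (n:ℝ) ≤ 2*m + 1 := by exact_mod_cast this
      linarith
    have hhalf : (0:ℝ) < (n:ℝ)/2 := by positivity
    -- split the sum
    have hsplit : ∑ j ∈ Finset.Icc 1 n, wfun α (n - j) * (j:ℝ)^β
        = (∑ j ∈ Finset.Ioc 0 m, wfun α (n - j) * (j:ℝ)^β)
          + ∑ j ∈ Finset.Ioc m n, wfun α (n - j) * (j:ℝ)^β := by
      rw [show Finset.Icc 1 n = Finset.Ioc 0 n from by rw [← Finset.Icc_add_one_left_eq_Ioc, zero_add],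
        Finset.sum_Ioc_consecutive _ (Nat.zero_le m) hmn]
    have hβterm_nonneg : ∀ j : ℕ, (0:ℝ) ≤ (j:ℝ)^β := fun j => Real.rpow_nonneg (Nat.cast_nonneg j) β
    -- part 1
    have hpart1 : ∑ j ∈ Finset.Ioc 0 m, wfun α (n - j) * (j:ℝ)^β
        ≤ ((n:ℝ)/2)^(α-1) * ((n:ℝ)^(β+1)/(β+1)) := by
      have hterm : ∀ j ∈ Finset.Ioc 0 m, wfun α (n - j) * (j:ℝ)^β
          ≤ ((n:ℝ)/2)^(α-1) * (j:ℝ)^β := by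
        intro j hj
        obtain ⟨hj0, hjm⟩ := Finset.mem_Ioc.mp hj
        have hjn : j ≤ n := le_trans hjm hmn
        have hcast : ((n - j : ℕ):ℝ) = (n:ℝ) - (j:ℝ) := by
          exact Nat.cast_sub hjn
        have hw : wfun α (n - j) ≤ ((n:ℝ)/2)^(α-1) := by
          refine le_trans (wfun_le hα0 hα1 (n-j)) ?_
          apply Real.rpow_le_rpow_of_nonpos hhalf _ (by linarith)
          rw [hcast]
          have : (j:ℝ) ≤ m := by exact_mod_cast hjm
          linarith
        exact mul_le_mul_of_nonneg_right hw (hβterm_nonneg j)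
      calc ∑ j ∈ Finset.Ioc 0 m, wfun α (n - j) * (j:ℝ)^β
          ≤ ∑ j ∈ Finset.Ioc 0 m, ((n:ℝ)/2)^(α-1) * (j:ℝ)^β := Finset.sum_le_sum hterm
        _ = ((n:ℝ)/2)^(α-1) * ∑ j ∈ Finset.Ioc 0 m, (j:ℝ)^β := by rw [Finset.mul_sum]
        _ ≤ ((n:ℝ)/2)^(α-1) * ((n:ℝ)^(β+1)/(β+1)) := by
            apply mul_le_mul_of_nonneg_left _ (by positivity)
            calc ∑ j ∈ Finset.Ioc 0 m, (j:ℝ)^β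
                ≤ ∑ j ∈ Finset.Ioc 0 n, (j:ℝ)^β := by
                  apply Finset.sum_le_sum_of_subset_of_nonneg
                  · exact Finset.Ioc_subset_Ioc_right hmn
                  · intro j _ _; exact hβterm_nonneg j
              _ = ∑ j ∈ Finset.Icc 1 n, (j:ℝ)^((β+1)-1) := by
                  rw [show Finset.Icc 1 n = Finset.Ioc 0 n from by rw [← Finset.Icc_add_one_left_eq_Ioc, zero_add]]
                  exact Finset.sum_congr rfl fun j _ => by norm_num
              _ ≤ (n:ℝ)^(β+1)/(β+1) := sum_rpow_le hb1 (by linarith) n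
    -- part 2
    have hpart2 : ∑ j ∈ Finset.Ioc m n, wfun α (n - j) * (j:ℝ)^β
        ≤ ((n:ℝ)/2)^β * ((n:ℝ)^α/α) := by
      have hterm : ∀ j ∈ Finset.Ioc m n, wfun α (n - j) * (j:ℝ)^β
          ≤ wfun α (n - j) * ((n:ℝ)/2)^β := by
        intro j hj
        obtain ⟨hjm, hjn⟩ := Finset.mem_Ioc.mp hj
        have hjhalf : (n:ℝ)/2 ≤ (j:ℝ) := by
          have : (m:ℝ) + 1 ≤ (j:ℝ) := by exact_mod_cast hjm
          linarith
        exact mul_le_mul_of_nonneg_left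
          (Real.rpow_le_rpow_of_nonpos hhalf hjhalf hb.le) (wfun_nonneg hα0 _)
      calc ∑ j ∈ Finset.Ioc m n, wfun α (n - j) * (j:ℝ)^β
          ≤ ∑ j ∈ Finset.Ioc m n, wfun α (n - j) * ((n:ℝ)/2)^β := Finset.sum_le_sum hterm
        _ = (∑ j ∈ Finset.Ioc m n, wfun α (n - j)) * ((n:ℝ)/2)^β := by rw [Finset.sum_mul]
        _ ≤ ((n:ℝ)^α/α) * ((n:ℝ)/2)^β := by
            apply mul_le_mul_of_nonneg_right _ (by positivity)
            refine le_trans ?_ (weight_sum_le hα0 hα1 n)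
            apply Finset.sum_le_sum_of_subset_of_nonneg
            · intro j hj
              obtain ⟨hjm, hjn⟩ := Finset.mem_Ioc.mp hj
              exact Finset.mem_Icc.mpr ⟨by omega, hjn⟩
            · intro j _ _; exact wfun_nonneg hα0 _
        _ = ((n:ℝ)/2)^β * ((n:ℝ)^α/α) := by ring
    -- algebra
    have e1 : ((n:ℝ)/2)^(α-1) = (n:ℝ)^(α-1) * (2:ℝ)^(1-α) := by
      rw [Real.div_rpow hn0.le (by norm_num : (0:ℝ) ≤ 2),
        show (1-α) = -(α-1) by ring, Real.rpow_neg (by norm_num : (0:ℝ) ≤ 2), div_eq_mul_inv]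
    have e2 : ((n:ℝ)/2)^β = (n:ℝ)^β * (2:ℝ)^(-β) := by
      rw [Real.div_rpow hn0.le (by norm_num : (0:ℝ) ≤ 2),
        Real.rpow_neg (by norm_num : (0:ℝ) ≤ 2), div_eq_mul_inv]
    have e3 : (n:ℝ)^(α-1) * (n:ℝ)^(β+1) = (n:ℝ)^(α+β) := by
      rw [← Real.rpow_add hn0]; congr 1; ring
    have e4 : (n:ℝ)^α * (n:ℝ)^β = (n:ℝ)^(α+β) := by
      rw [← Real.rpow_add hn0]
    have halg : ((n:ℝ)/2)^(α-1) * ((n:ℝ)^(β+1)/(β+1)) + ((n:ℝ)/2)^β * ((n:ℝ)^α/α)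
        = ((2:ℝ)^(1-α)/(β+1) + (2:ℝ)^(-β)/α) * (n:ℝ)^(α+β) := by
      have : ((n:ℝ)/2)^(α-1) * ((n:ℝ)^(β+1)/(β+1)) + ((n:ℝ)/2)^β * ((n:ℝ)^α/α)
          = (2:ℝ)^(1-α)/(β+1) * ((n:ℝ)^(α-1) * (n:ℝ)^(β+1))
            + (2:ℝ)^(-β)/α * ((n:ℝ)^α * (n:ℝ)^β) := by
        rw [e1, e2]; ring
      rw [this, e3, e4]; ring
    rw [hsplit]
    calc (∑ j ∈ Finset.Ioc 0 m, wfun α (n - j) * (j:ℝ)^β)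
          + ∑ j ∈ Finset.Ioc m n, wfun α (n - j) * (j:ℝ)^β
        ≤ ((n:ℝ)/2)^(α-1) * ((n:ℝ)^(β+1)/(β+1)) + ((n:ℝ)/2)^β * ((n:ℝ)^α/α) :=
          add_le_add hpart1 hpart2
      _ = ((2:ℝ)^(1-α)/(β+1) + (2:ℝ)^(-β)/α) * (n:ℝ)^(α+β) := halg

/-- Discrete fractional integral of a power:
`τ^α Σ_{j=1}^n a_{n-j}^{(-α)} (jτ)^β ≤ C (nτ)^{α+β}`. -/
theorem stmt15 (α β : ℝ) (hα0 : 0 < α) (hα1 : α < 1) (hβ : -1 < β) :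
    ∃ C > 0, ∀ τ : ℝ, 0 < τ → ∀ n : ℕ, 1 ≤ n →
      τ ^ α * ∑ j ∈ Finset.Icc 1 n, cqWeight (-α) (n - j) * ((j : ℝ) * τ) ^ β ≤
        C * ((n : ℝ) * τ) ^ (α + β) := by
  obtain ⟨C, hC, hkey⟩ := key α β hα0 hα1 hβ
  refine ⟨C, hC, fun τ hτ n hn => ?_⟩
  have h1 : ∑ j ∈ Finset.Icc 1 n, cqWeight (-α) (n - j) * ((j:ℝ)*τ)^β
      = (∑ j ∈ Finset.Icc 1 n, wfun α (n - j) * (j:ℝ)^β) * τ^β := by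
    rw [Finset.sum_mul]
    refine Finset.sum_congr rfl fun j _ => ?_
    rw [cq_eq, Real.mul_rpow (Nat.cast_nonneg j) hτ.le]
    ring
  calc τ^α * ∑ j ∈ Finset.Icc 1 n, cqWeight (-α) (n - j) * ((j:ℝ)*τ)^β
      = (∑ j ∈ Finset.Icc 1 n, wfun α (n - j) * (j:ℝ)^β) * τ^(α+β) := by
        rw [h1, Real.rpow_add hτ]; ring
    _ ≤ (C * (n:ℝ)^(α+β)) * τ^(α+β) :=
        mul_le_mul_of_nonneg_right (hkey n hn) (Real.rpow_nonneg hτ.le _)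
    _ = C * ((n:ℝ)*τ)^(α+β) := by
        rw [Real.mul_rpow (Nat.cast_nonneg n) hτ.le]; ring
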